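/- For every integer n ≥ 8 with n ≡ 0, 4, or 7 (mod 8), there exists a 3-connected locally nonforesty graph of order n with exactly 2n - ⌊n/8⌋ edges. -/

import Mathlib

open SimpleGraph

def LocallyNonforesty {V : Type*} (G : SimpleGraph V) : Prop :=
  ∀ v : V, ¬ (G.induce (G.neighborSet v)).IsAcyclic

def ThreeConnected {V : Type*} [Fintype V] (G : SimpleGraph V) : Prop :=
  4 ≤ Fintype.card V ∧ ∀ S : Finset V, S.card ≤ 2 → (G.induce ((↑S : Set V)ᶜ)).Connected

namespace S15

/-- number of meta-nodes (quads) -/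
def MQ (n : ℕ) : ℕ := (n+3)/4
/-- half, for chord structure -/
def hQ (n : ℕ) : ℕ := MQ n / 2

/-- base vertex of quad q -/
def base (n q : ℕ) : ℕ := if q = MQ n - 1 then n - 4 else 4*q

/-- cyclic successor among quads -/
def sG (m q : ℕ) : ℕ := if q + 1 = m then 0 else q + 1
/-- cyclic distance -/
def dG (m x y : ℕ) : ℕ := if x ≤ y then y - x else y + m - x
/-- rotate -/
def rG (m q d : ℕ) : ℕ := if q + d < m then q + d else q + d - m

def cycOK (n q : ℕ) : Prop := q < MQ n ∧ ¬(n % 4 = 3 ∧ q = MQ n - 2)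
def cycA (q : ℕ) : ℕ := 4*q
def cycB (n q : ℕ) : ℕ := 4 * sG (MQ n) q + 1
def chordOK (n i : ℕ) : Prop := i + hQ n < MQ n
def chordA (i : ℕ) : ℕ := 4*i + 2
def chordB (n i : ℕ) : ℕ :=
  if n % 4 = 3 ∧ i + hQ n = MQ n - 2 then 4*(MQ n - 2)
  else if n % 4 = 3 ∧ i + hQ n = MQ n - 1 then 4*(MQ n - 1) + 2
  else 4*(i + hQ n) + 3

def Conn (n x y : ℕ) : Prop :=
  (∃ q, cycOK n q ∧ x = cycA q ∧ y = cycB n q) ∨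
  (∃ i, chordOK n i ∧ x = chordA i ∧ y = chordB n i)

def Rel (n x y : ℕ) : Prop :=
  x / 4 = y / 4 ∨ (n - 4 ≤ x ∧ n - 4 ≤ y) ∨ Conn n x y ∨ Conn n y x

lemma Rel.symm' {n x y : ℕ} (h : Rel n x y) : Rel n y x := by
  rcases h with h | h | h | h
  · exact Or.inl h.symm
  · exact Or.inr (Or.inl ⟨h.2, h.1⟩)
  · exact Or.inr (Or.inr (Or.inr h))
  · exact Or.inr (Or.inr (Or.inl h))

def Gr (n : ℕ) : SimpleGraph (Fin n) where
  Adj v w := v ≠ w ∧ Rel n v.val w.val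
  symm := ⟨fun v w ⟨h1, h2⟩ => ⟨h1.symm, h2.symm'⟩⟩
  loopless := ⟨fun v h => h.1 rfl⟩

lemma Gr_adj {n : ℕ} {v w : Fin n} : (Gr n).Adj v w ↔ v ≠ w ∧ Rel n v.val w.val := Iff.rfl

section basics
variable {n : ℕ} (h8 : 8 ≤ n) (hr : n % 8 = 0 ∨ n % 8 = 4 ∨ n % 8 = 7)
include h8 hr


lemma M_ge2 : 2 ≤ MQ n := by unfold MQ; omega


lemma h_ge1 : 1 ≤ hQ n := by unfold hQ MQ; omega


lemma hM_bounds : 2 * hQ n ≤ MQ n ∧ MQ n ≤ 2 * hQ n + 1 := by unfold hQ MQ; omega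


lemma n_eq : (n % 4 = 3 ∧ n + 1 = 4 * MQ n) ∨ (n % 4 = 0 ∧ n = 4 * MQ n) := by
  unfold MQ; omega

/-- window bound: base q + 3 ≤ n - 1 -/

lemma base_bound {q : ℕ} (hq : q < MQ n) : base n q + 3 < n := by
  unfold base MQ at *; split_ifs <;> omega


lemma div4_lt_M {v : ℕ} (hv : v < n) : v / 4 < MQ n := by
  unfold MQ; omega

/-- every vertex is in the window of its quad -/

lemma inW_div4 {v : ℕ} (hv : v < n) :
    base n (min (v/4) (MQ n - 1)) ≤ v ∧ v < base n (min (v/4) (MQ n - 1)) + 4 := by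
  unfold base MQ at *; split_ifs <;> omega

/-- window membership implies Rel -/

lemma rel_window {q x y : ℕ} (hq : q < MQ n) (hx1 : base n q ≤ x) (hx2 : x < base n q + 4)
    (hy1 : base n q ≤ y) (hy2 : y < base n q + 4) : Rel n x y := by
  unfold base MQ at *
  split_ifs at hx1 hx2 hy1 hy2 with hq1
  · -- q = M - 1
    rcases n_eq h8 hr with ⟨h3, h4⟩ | ⟨h3, h4⟩
    · exact Or.inr (Or.inl ⟨by omega, by omega⟩)
    · exact Or.inl (by omega)
  · exact Or.inl (by omega)

end basics

def offsetPairs : Finset (ℕ × ℕ) := {(0,1),(0,2),(0,3),(1,2),(1,3),(2,3)}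

def quadPairs (n q : ℕ) : Finset (Sym2 ℕ) :=
  offsetPairs.image (fun p => s(base n q + p.1, base n q + p.2))

def internalF (n : ℕ) : Finset (Sym2 ℕ) := (Finset.range (MQ n)).biUnion (quadPairs n)

def cycF (n : ℕ) : Finset (Sym2 ℕ) :=
  ((Finset.range (MQ n)).filter (fun q => ¬(n % 4 = 3 ∧ q = MQ n - 2))).image
    (fun q => s(cycA q, cycB n q))

def chF (n : ℕ) : Finset (Sym2 ℕ) :=
  (Finset.range (MQ n - hQ n)).image (fun i => s(chordA i, chordB n i))

def EF (n : ℕ) : Finset (Sym2 ℕ) := internalF n ∪ cycF n ∪ chF n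

section counting
variable {n : ℕ} (h8 : 8 ≤ n) (hr : n % 8 = 0 ∨ n % 8 = 4 ∨ n % 8 = 7)
include h8 hr

omit h8 hr in
lemma offsetPairs_spec : ∀ p ∈ offsetPairs, p.1 < p.2 ∧ p.2 < 4 := by decide

omit h8 hr in
lemma mem_offsetPairs {i j : ℕ} (hij : i < j) (hj : j < 4) : (i, j) ∈ offsetPairs := by
  interval_cases j <;> interval_cases i <;> decide

omit h8 hr in
lemma card_offsetPairs : offsetPairs.card = 6 := by decide

lemma card_quadPairs {q : ℕ} (hq : q < MQ n) : (quadPairs n q).card = 6 := by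
  rw [quadPairs, Finset.card_image_of_injOn, card_offsetPairs]
  intro p hp p' hp' he
  obtain ⟨h1, h2⟩ := offsetPairs_spec p hp
  obtain ⟨h1', h2'⟩ := offsetPairs_spec p' hp'
  rw [Sym2.eq_iff] at he
  have : p.1 = p'.1 ∧ p.2 = p'.2 := by omega
  exact Prod.ext this.1 this.2

lemma quadPairs_disj {q q' : ℕ} (hq : q < MQ n) (hq' : q' < MQ n) (hne : q ≠ q') :
    Disjoint (quadPairs n q) (quadPairs n q') := by
  rw [Finset.disjoint_left]
  intro e he he'
  rw [quadPairs, Finset.mem_image] at he he'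
  obtain ⟨p, hp, hpe⟩ := he
  obtain ⟨p', hp', hpe'⟩ := he'
  obtain ⟨h1, h2⟩ := offsetPairs_spec p hp
  obtain ⟨h1', h2'⟩ := offsetPairs_spec p' hp'
  rw [← hpe', Sym2.eq_iff] at hpe
  simp only [base] at hpe
  unfold MQ at *
  split_ifs at hpe <;> omega

lemma card_internalF : (internalF n).card = 6 * MQ n := by
  rw [internalF, Finset.card_biUnion]
  · rw [Finset.sum_congr rfl (fun q hq => card_quadPairs h8 hr (Finset.mem_range.mp hq))]
    simp [Finset.sum_const, Finset.card_range, Nat.mul_comm]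
  · intro q hq q' hq' hne
    exact quadPairs_disj h8 hr (Finset.mem_range.mp hq) (Finset.mem_range.mp hq') hne

lemma card_cycF : (cycF n).card = (if n % 4 = 3 then MQ n - 1 else MQ n) := by
  rw [cycF, Finset.card_image_of_injOn]
  · split_ifs with h4
    · have : ((Finset.range (MQ n)).filter (fun q => ¬(n % 4 = 3 ∧ q = MQ n - 2)))
          = (Finset.range (MQ n)).erase (MQ n - 2) := by
        ext q
        simp [Finset.mem_erase, h4, and_comm]
      rw [this, Finset.card_erase_of_mem, Finset.card_range]
      have := M_ge2 h8 hr
      simp [Finset.mem_range]; omega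
    · have : ((Finset.range (MQ n)).filter (fun q => ¬(n % 4 = 3 ∧ q = MQ n - 2)))
          = Finset.range (MQ n) := by
        ext q; simp [Finset.mem_range]; intro _; omega
      rw [this, Finset.card_range]
  · intro q hq q' hq' he
    simp only [Finset.mem_coe, Finset.mem_filter, Finset.mem_range] at hq hq'
    rw [Sym2.eq_iff] at he
    unfold cycA cycB sG MQ at he
    split_ifs at he <;> omega

lemma card_chF : (chF n).card = MQ n - hQ n := by
  rw [chF, Finset.card_image_of_injOn, Finset.card_range]
  intro i hi i' hi' he
  simp only [Finset.mem_coe, Finset.mem_range] at hi hi'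
  rw [Sym2.eq_iff] at he
  unfold chordA chordB hQ MQ at *
  split_ifs at he <;> omega

lemma disj_cyc_ch : Disjoint (cycF n) (chF n) := by
  rw [Finset.disjoint_left]
  intro e he he'
  rw [cycF, Finset.mem_image] at he
  rw [chF, Finset.mem_image] at he'
  obtain ⟨q, hq, hqe⟩ := he
  obtain ⟨i, hi, hie⟩ := he'
  simp only [Finset.mem_filter, Finset.mem_range] at hq hi
  rw [← hie, Sym2.eq_iff] at hqe
  unfold cycA cycB chordA chordB sG hQ MQ at *
  split_ifs at hqe <;> omega

lemma disj_int_cyc : Disjoint (internalF n) (cycF n) := by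
  rw [Finset.disjoint_left]
  intro e he he'
  rw [internalF, Finset.mem_biUnion] at he
  rw [cycF, Finset.mem_image] at he'
  obtain ⟨t, ht, hte⟩ := he
  obtain ⟨q, hq, hqe⟩ := he'
  rw [quadPairs, Finset.mem_image] at hte
  obtain ⟨p, hp, hpe⟩ := hte
  obtain ⟨h1, h2⟩ := offsetPairs_spec p hp
  simp only [Finset.mem_filter, Finset.mem_range] at hq ht
  rw [← hpe, Sym2.eq_iff] at hqe
  unfold base cycA cycB sG MQ at *
  split_ifs at hqe <;> omega

lemma disj_int_ch : Disjoint (internalF n) (chF n) := by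
  rw [Finset.disjoint_left]
  intro e he he'
  rw [internalF, Finset.mem_biUnion] at he
  rw [chF, Finset.mem_image] at he'
  obtain ⟨t, ht, hte⟩ := he
  obtain ⟨i, hi, hie⟩ := he'
  rw [quadPairs, Finset.mem_image] at hte
  obtain ⟨p, hp, hpe⟩ := hte
  obtain ⟨h1, h2⟩ := offsetPairs_spec p hp
  simp only [Finset.mem_range] at hi ht
  rw [← hpe, Sym2.eq_iff] at hie
  unfold base chordA chordB hQ MQ at *
  split_ifs at hie <;> omega

lemma card_EF : (EF n).card = 2 * n - n / 8 := by
  have hd1 : Disjoint (internalF n) (cycF n ∪ chF n) :=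
    Finset.disjoint_union_right.mpr ⟨disj_int_cyc h8 hr, disj_int_ch h8 hr⟩
  rw [EF, Finset.union_assoc, Finset.card_union_of_disjoint hd1,
    Finset.card_union_of_disjoint (disj_cyc_ch h8 hr), card_internalF h8 hr,
    card_cycF h8 hr, card_chF h8 hr]
  unfold hQ MQ
  split_ifs <;> omega

end counting

section correspond
variable {n : ℕ} (h8 : 8 ≤ n) (hr : n % 8 = 0 ∨ n % 8 = 4 ∨ n % 8 = 7)
include h8 hr

lemma mem_internalF_of_window {q x y : ℕ} (hq : q < MQ n) (hx1 : base n q ≤ x)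
    (hx2 : x < base n q + 4) (hy1 : base n q ≤ y) (hy2 : y < base n q + 4)
    (hxy : x ≠ y) : s(x, y) ∈ internalF n := by
  rw [internalF, Finset.mem_biUnion]
  refine ⟨q, Finset.mem_range.mpr hq, ?_⟩
  rw [quadPairs, Finset.mem_image]
  rcases Nat.lt_or_ge x y with hlt | hge
  · refine ⟨(x - base n q, y - base n q), mem_offsetPairs (by omega) (by omega), ?_⟩
    have e1 : base n q + (x - base n q) = x := by omega
    have e2 : base n q + (y - base n q) = y := by omega
    simp only [e1, e2]
  · have hlt : y < x := by omega
    refine ⟨(y - base n q, x - base n q), mem_offsetPairs (by omega) (by omega), ?_⟩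
    have e1 : base n q + (y - base n q) = y := by omega
    have e2 : base n q + (x - base n q) = x := by omega
    simp only [e1, e2, Sym2.eq_swap]

lemma adj_to_E {v w : Fin n} (h : (Gr n).Adj v w) : s(v.val, w.val) ∈ EF n := by
  obtain ⟨hne, hrel⟩ := h
  have hvn : v.val < n := v.isLt
  have hwn : w.val < n := w.isLt
  have hvw : v.val ≠ w.val := fun hc => hne (Fin.ext hc)
  rcases hrel with h1 | h2 | h3 | h4
  · -- same quad by div 4
    refine Finset.mem_union.mpr (Or.inl (Finset.mem_union.mpr (Or.inl ?_)))
    refine mem_internalF_of_window h8 hr (q := v.val / 4) (div4_lt_M h8 hr hvn)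
      ?_ ?_ ?_ ?_ hvw <;>
    · unfold base MQ at *; split_ifs <;> omega
  · refine Finset.mem_union.mpr (Or.inl (Finset.mem_union.mpr (Or.inl ?_)))
    refine mem_internalF_of_window h8 hr (q := MQ n - 1) (by have := M_ge2 h8 hr; omega)
      ?_ ?_ ?_ ?_ hvw <;>
    · unfold base MQ at *; split_ifs <;> omega
  · obtain ⟨q, hOK, hx, hy⟩ | ⟨i, hOK, hx, hy⟩ := h3
    · refine Finset.mem_union.mpr (Or.inl (Finset.mem_union.mpr (Or.inr ?_)))
      rw [cycF, Finset.mem_image]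
      exact ⟨q, Finset.mem_filter.mpr ⟨Finset.mem_range.mpr hOK.1, hOK.2⟩, by rw [hx, hy]⟩
    · refine Finset.mem_union.mpr (Or.inr ?_)
      rw [chF, Finset.mem_image]
      refine ⟨i, Finset.mem_range.mpr (by unfold chordOK at hOK; omega), by rw [hx, hy]⟩
  · obtain ⟨q, hOK, hx, hy⟩ | ⟨i, hOK, hx, hy⟩ := h4
    · refine Finset.mem_union.mpr (Or.inl (Finset.mem_union.mpr (Or.inr ?_)))
      rw [cycF, Finset.mem_image]
      refine ⟨q, Finset.mem_filter.mpr ⟨Finset.mem_range.mpr hOK.1, hOK.2⟩, ?_⟩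
      rw [hx, hy, Sym2.eq_swap]
    · refine Finset.mem_union.mpr (Or.inr ?_)
      rw [chF, Finset.mem_image]
      refine ⟨i, Finset.mem_range.mpr (by unfold chordOK at hOK; omega), ?_⟩
      rw [hx, hy, Sym2.eq_swap]

lemma E_to_adj {e : Sym2 ℕ} (he : e ∈ EF n) :
    ∃ (x y : ℕ) (hx : x < n) (hy : y < n),
      e = s(x, y) ∧ (Gr n).Adj ⟨x, hx⟩ ⟨y, hy⟩ := by
  have hM2 := M_ge2 h8 hr
  have hh1 := h_ge1 h8 hr
  have hMb := hM_bounds h8 hr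
  have hne4 := n_eq h8 hr
  rcases Finset.mem_union.mp he with he' | hch
  · rcases Finset.mem_union.mp he' with hint | hcyc
    · rw [internalF, Finset.mem_biUnion] at hint
      obtain ⟨q, hq, hqe⟩ := hint
      rw [quadPairs, Finset.mem_image] at hqe
      obtain ⟨p, hp, hpe⟩ := hqe
      obtain ⟨hp1, hp2⟩ := offsetPairs_spec p hp
      rw [Finset.mem_range] at hq
      have hb := base_bound h8 hr hq
      refine ⟨base n q + p.1, base n q + p.2, by omega, by omega, hpe.symm, ?_⟩
      refine ⟨by simp [Fin.ext_iff]; omega, ?_⟩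
      have hrel : Rel n (base n q + p.1) (base n q + p.2) :=
        rel_window h8 hr hq (by omega) (by omega) (by omega) (by omega)
      exact hrel
    · rw [cycF, Finset.mem_image] at hcyc
      obtain ⟨q, hq, hqe⟩ := hcyc
      rw [Finset.mem_filter, Finset.mem_range] at hq
      have hxlt : cycA q < n := by unfold cycA MQ at *; omega
      have hylt : cycB n q < n := by unfold cycB sG MQ at *; split_ifs <;> omega
      refine ⟨cycA q, cycB n q, hxlt, hylt, hqe.symm, ?_⟩
      refine ⟨by simp [Fin.ext_iff]; unfold cycA cycB; omega, ?_⟩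
      exact Or.inr (Or.inr (Or.inl (Or.inl ⟨q, ⟨hq.1, hq.2⟩, rfl, rfl⟩)))
  · rw [chF, Finset.mem_image] at hch
    obtain ⟨i, hi, hie⟩ := hch
    rw [Finset.mem_range] at hi
    have hxlt : chordA i < n := by unfold chordA hQ MQ at *; omega
    have hylt : chordB n i < n := by unfold chordB hQ MQ at *; split_ifs <;> omega
    refine ⟨chordA i, chordB n i, hxlt, hylt, hie.symm, ?_⟩
    refine ⟨by simp [Fin.ext_iff]; unfold chordA chordB hQ MQ at *; split_ifs <;> omega, ?_⟩
    exact Or.inr (Or.inr (Or.inl (Or.inr ⟨i, by unfold chordOK; omega, rfl, rfl⟩)))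

lemma edge_image : Sym2.map Fin.val '' (Gr n).edgeSet = ↑(EF n) := by
  ext e
  simp only [Set.mem_image, Finset.mem_coe]
  constructor
  · rintro ⟨e', he', rfl⟩
    induction e' with
    | _ v w =>
      rw [SimpleGraph.mem_edgeSet] at he'
      exact adj_to_E h8 hr he'
  · intro he
    obtain ⟨x, y, hx, hy, rfl, hadj⟩ := E_to_adj h8 hr he
    exact ⟨s((⟨x, hx⟩ : Fin n), (⟨y, hy⟩ : Fin n)), (SimpleGraph.mem_edgeSet _).mpr hadj, rfl⟩

lemma ncard_edges : (Gr n).edgeSet.ncard = 2 * n - n / 8 := by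
  rw [← card_EF h8 hr, ← Set.ncard_coe_finset, ← edge_image h8 hr,
    Set.ncard_image_of_injective _ (Sym2.map.injective Fin.val_injective)]

end correspond

section conn

def Sv {n : ℕ} (S : Finset (Fin n)) : Finset ℕ := S.image Fin.val

def toV {n : ℕ} (S : Finset (Fin n)) (x : ℕ) (hx : x < n) (ha : x ∉ Sv S) :
    ↥((↑S : Set (Fin n))ᶜ) :=
  ⟨⟨x, hx⟩, fun hc => ha (Finset.mem_image_of_mem Fin.val (Finset.mem_coe.mp hc))⟩

def inW (n q x : ℕ) : Prop := base n q ≤ x ∧ x < base n q + 4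

variable {n : ℕ} (h8 : 8 ≤ n) (hr : n % 8 = 0 ∨ n % 8 = 4 ∨ n % 8 = 7)
  (S : Finset (Fin n)) (hS : S.card ≤ 2)
include h8 hr hS

def MR (q q' : ℕ) : Prop :=
  ∀ x y (hx : x < n) (hy : y < n) (hax : x ∉ Sv S) (hay : y ∉ Sv S),
    inW n q x → inW n q' y →
    ((Gr n).induce ((↑S : Set (Fin n))ᶜ)).Reachable (toV S x hx hax) (toV S y hy hay)

omit h8 hr in
lemma card_Sv : (Sv S).card ≤ 2 := le_trans (Finset.card_image_le) hS

lemma quad_alive {q : ℕ} (hq : q < MQ n) : ∃ z, z < n ∧ z ∉ Sv S ∧ inW n q z := by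
  by_contra hc
  push_neg at hc
  have hb := base_bound h8 hr hq
  have key : ∀ j, j < 4 → base n q + j ∈ Sv S := by
    intro j hj
    by_contra hz
    exact hc _ (by omega) hz ⟨by omega, by omega⟩
  have hsub : ({base n q, base n q + 1, base n q + 2} : Finset ℕ) ⊆ Sv S := by
    intro t ht
    simp only [Finset.mem_insert, Finset.mem_singleton] at ht
    rcases ht with rfl | rfl | rfl
    · simpa using key 0 (by omega)
    · exact key 1 (by omega)
    · exact key 2 (by omega)
  have h3 : ({base n q, base n q + 1, base n q + 2} : Finset ℕ).card = 3 := by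
    rw [Finset.card_insert_of_notMem (by simp only [Finset.mem_insert, Finset.mem_singleton]; omega),
      Finset.card_insert_of_notMem (by simp only [Finset.mem_singleton]; omega),
      Finset.card_singleton]
  have hle := Finset.card_le_card hsub
  have hcs := card_Sv S hS
  omega

omit hS in
lemma adj_step {q x y : ℕ} (hq : q < MQ n) (hx : x < n) (hy : y < n)
    (hax : x ∉ Sv S) (hay : y ∉ Sv S) (hwx : inW n q x) (hwy : inW n q y) (hxy : x ≠ y) :
    ((Gr n).induce ((↑S : Set (Fin n))ᶜ)).Adj (toV S x hx hax) (toV S y hy hay) :=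
  ⟨by simpa [toV, Fin.ext_iff] using hxy,
   rel_window h8 hr hq hwx.1 hwx.2 hwy.1 hwy.2⟩

omit hS in
lemma MR_single {q : ℕ} (hq : q < MQ n) : MR S q q := by
  intro x y hx hy hax hay hwx hwy
  rcases eq_or_ne x y with rfl | hne
  · have : toV S x hx hax = toV S x hy hay := Subtype.ext (Fin.ext rfl)
    rw [this]
  · exact (adj_step h8 hr S hq hx hy hax hay hwx hwy hne).reachable

lemma MR_trans {q q' q'' : ℕ} (h1 : MR S q q') (hq' : q' < MQ n) (h2 : MR S q' q'') :
    MR S q q'' := by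
  intro x y hx hy hax hay hwx hwy
  obtain ⟨z, hz, haz, hwz⟩ := quad_alive h8 hr S hS hq'
  exact (h1 x z hx hz hax haz hwx hwz).trans (h2 z y hz hy haz hay hwz hwy)

omit h8 hr hS in
lemma MR_symm {q q' : ℕ} (h1 : MR S q q') : MR S q' q :=
  fun x y hx hy hax hay hwx hwy => (h1 y x hy hx hay hax hwy hwx).symm

omit hS in
lemma MR_edge {q q' u w : ℕ} (hq : q < MQ n) (hq' : q' < MQ n) (hu : u < n) (hw : w < n)
    (hau : u ∉ Sv S) (haw : w ∉ Sv S) (hwu : inW n q u) (hww : inW n q' w)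
    (hne : u ≠ w) (hrel : Rel n u w) : MR S q q' := by
  intro x y hx hy hax hay hwx hwy
  have r1 := MR_single h8 hr S hq x u hx hu hax hau hwx hwu
  have r2 : ((Gr n).induce ((↑S : Set (Fin n))ᶜ)).Adj (toV S u hu hau) (toV S w hw haw) :=
    ⟨by simpa [toV, Fin.ext_iff] using hne, hrel⟩
  have r3 := MR_single h8 hr S hq' w y hw hy haw hay hww hwy
  exact (r1.trans r2.reachable).trans r3

def cycleAlive (q : ℕ) : Prop :=
  if n % 4 = 3 ∧ q = MQ n - 2 then (n-4) ∉ Sv S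
  else (cycA q ∉ Sv S ∧ cycB n q ∉ Sv S)

def chordAlive (i : ℕ) : Prop := chordA i ∉ Sv S ∧ chordB n i ∉ Sv S

omit hS in
lemma MR_cyc {q : ℕ} (hq : q < MQ n) (hca : cycleAlive S q) : MR S q (sG (MQ n) q) := by
  have hM2 := M_ge2 h8 hr
  have hne4 := n_eq h8 hr
  unfold cycleAlive at hca
  split_ifs at hca with hsp
  · -- shared vertex
    obtain ⟨h4, rfl⟩ := hsp
    have hsg : sG (MQ n) (MQ n - 2) = MQ n - 1 := by unfold sG; split_ifs <;> omega
    rw [hsg]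
    intro x y hx hy hax hay hwx hwy
    have hnlt : n - 4 < n := by omega
    have hw1 : inW n (MQ n - 2) (n-4) := by unfold inW base; split_ifs <;> omega
    have hw2 : inW n (MQ n - 1) (n-4) := by unfold inW base; split_ifs <;> omega
    exact (MR_single h8 hr S (by omega) x (n-4) hx hnlt hax hca hwx hw1).trans
      (MR_single h8 hr S (by omega) (n-4) y hnlt hy hca hay hw2 hwy)
  · have hsg : sG (MQ n) q < MQ n := by unfold sG; split_ifs <;> omega
    refine MR_edge h8 hr S hq hsg ?_ ?_ hca.1 hca.2 ?_ ?_ ?_ ?_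
    · unfold cycA MQ at *; omega
    · unfold cycB sG MQ at *; split_ifs <;> omega
    · unfold inW base cycA MQ at *; split_ifs <;> omega
    · unfold inW base cycB sG MQ at *; split_ifs <;> omega
    · unfold cycA cycB; omega
    · exact Or.inr (Or.inr (Or.inl (Or.inl ⟨q, ⟨hq, hsp⟩, rfl, rfl⟩)))

omit hS in
lemma MR_chord {i : ℕ} (hi : i + hQ n < MQ n) (hca : chordAlive S i) :
    MR S i (i + hQ n) := by
  have hh1 := h_ge1 h8 hr
  have hMb := hM_bounds h8 hr
  have hne4 := n_eq h8 hr
  refine MR_edge h8 hr S (by omega) (by omega) ?_ ?_ hca.1 hca.2 ?_ ?_ ?_ ?_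
  · unfold chordA hQ MQ at *; omega
  · unfold chordB hQ MQ at *; split_ifs <;> omega
  · unfold inW base chordA hQ MQ at *; split_ifs <;> omega
  · unfold inW base chordB hQ MQ at *; split_ifs <;> omega
  · unfold chordA chordB hQ MQ at *; split_ifs <;> omega
  · exact Or.inr (Or.inr (Or.inl (Or.inr ⟨i, hi, rfl, rfl⟩)))

end conn

section conn2
variable {n : ℕ} (h8 : 8 ≤ n) (hr : n % 8 = 0 ∨ n % 8 = 4 ∨ n % 8 = 7)
  (S : Finset (Fin n)) (hS : S.card ≤ 2)
include h8 hr hS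

def killsC (n q s : ℕ) : Prop :=
  if n % 4 = 3 ∧ q = MQ n - 2 then s = n - 4 else (s = cycA q ∨ s = cycB n q)

def killsH (n i s : ℕ) : Prop := s = chordA i ∨ s = chordB n i

omit h8 hr hS in
lemma killer_cyc {q : ℕ} (hd : ¬ cycleAlive S q) : ∃ s ∈ Sv S, killsC n q s := by
  unfold cycleAlive at hd
  unfold killsC
  split_ifs at hd ⊢ with hsp
  · exact ⟨n - 4, not_not.mp hd, rfl⟩
  · push_neg at hd
    by_cases h1 : cycA q ∈ Sv S
    · exact ⟨cycA q, h1, Or.inl rfl⟩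
    · exact ⟨cycB n q, hd h1, Or.inr rfl⟩

omit h8 hr hS in
lemma killer_ch {i : ℕ} (hd : ¬ chordAlive S i) : ∃ s ∈ Sv S, killsH n i s := by
  unfold chordAlive at hd
  push_neg at hd
  by_cases h1 : chordA i ∈ Sv S
  · exact ⟨chordA i, h1, Or.inl rfl⟩
  · exact ⟨chordB n i, hd h1, Or.inr rfl⟩

omit hS in
lemma kC_ne {q q' s s' : ℕ} (hq : q < MQ n) (hq' : q' < MQ n) (hne : q ≠ q')
    (h1 : killsC n q s) (h2 : killsC n q' s') : s ≠ s' := by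
  have hne4 := n_eq h8 hr
  unfold killsC cycA cycB sG at h1 h2
  unfold MQ at *
  split_ifs at h1 h2 <;> omega

omit hS in
lemma kCH_ne {q i s s' : ℕ} (hq : q < MQ n) (hi : i + hQ n < MQ n)
    (h1 : killsC n q s) (h2 : killsH n i s') : s ≠ s' := by
  have hne4 := n_eq h8 hr
  have hh1 := h_ge1 h8 hr
  have hMb := hM_bounds h8 hr
  unfold killsC cycA cycB sG at h1
  unfold killsH chordA chordB at h2
  unfold hQ MQ at *
  split_ifs at h1 h2 <;> omega

omit hS in
lemma kH_ne {i i' s s' : ℕ} (hi : i + hQ n < MQ n) (hi' : i' + hQ n < MQ n) (hne : i ≠ i')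
    (h1 : killsH n i s) (h2 : killsH n i' s') : s ≠ s' := by
  have hne4 := n_eq h8 hr
  have hh1 := h_ge1 h8 hr
  have hMb := hM_bounds h8 hr
  unfold killsH chordA chordB at h1 h2
  unfold hQ MQ at *
  split_ifs at h1 h2 <;> omega

omit h8 hr in
lemma three_distinct {s1 s2 s3 : ℕ} (m1 : s1 ∈ Sv S) (m2 : s2 ∈ Sv S) (m3 : s3 ∈ Sv S)
    (d12 : s1 ≠ s2) (d13 : s1 ≠ s3) (d23 : s2 ≠ s3) : False := by
  have hsub : ({s1, s2, s3} : Finset ℕ) ⊆ Sv S := by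
    intro t ht
    simp only [Finset.mem_insert, Finset.mem_singleton] at ht
    rcases ht with rfl | rfl | rfl <;> assumption
  have h3 : ({s1, s2, s3} : Finset ℕ).card = 3 := by
    rw [Finset.card_insert_of_notMem (by simp only [Finset.mem_insert, Finset.mem_singleton]; tauto),
      Finset.card_insert_of_notMem (by simp only [Finset.mem_singleton]; exact d23),
      Finset.card_singleton]
  have hle := Finset.card_le_card hsub
  have hcs := card_Sv S hS
  omega

lemma cycSeg : ∀ d, d ≤ MQ n → ∀ q, q < MQ n →
    (∀ j, j < d → cycleAlive S (rG (MQ n) q j)) → MR S q (rG (MQ n) q d) := by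
  intro d
  induction d with
  | zero =>
    intro _ q hq _
    have he : rG (MQ n) q 0 = q := by unfold rG; split_ifs <;> omega
    rw [he]
    exact MR_single h8 hr S hq
  | succ d ih =>
    intro hdM q hq halive
    have h1 := ih (by omega) q hq (fun j hj => halive j (by omega))
    have hrb : rG (MQ n) q d < MQ n := by unfold rG; split_ifs <;> omega
    have h2 := MR_cyc h8 hr S hrb (halive d (by omega))
    have he : sG (MQ n) (rG (MQ n) q d) = rG (MQ n) q (d+1) := by
      unfold sG rG; split_ifs <;> omega
    rw [he] at h2
    exact MR_trans h8 hr S hS h1 hrb h2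

omit hS in
lemma crossing {a b : ℕ} (ha : a < MQ n) (hb : b < MQ n) (hab : a ≠ b) :
    ∃ i, i + hQ n < MQ n ∧
      ((dG (MQ n) (sG (MQ n) a) i ≤ dG (MQ n) (sG (MQ n) a) b ∧
        ¬ dG (MQ n) (sG (MQ n) a) (i + hQ n) ≤ dG (MQ n) (sG (MQ n) a) b) ∨
       (¬ dG (MQ n) (sG (MQ n) a) i ≤ dG (MQ n) (sG (MQ n) a) b ∧
        dG (MQ n) (sG (MQ n) a) (i + hQ n) ≤ dG (MQ n) (sG (MQ n) a) b)) := by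
  have hM2 := M_ge2 h8 hr
  have hh1 := h_ge1 h8 hr
  have hMb := hM_bounds h8 hr
  set m := MQ n with hm
  set h := hQ n with hh
  by_cases hda : dG m a b ≤ h
  · by_cases hbh : h ≤ b
    · refine ⟨b - h, by omega, Or.inr ⟨?_, ?_⟩⟩ <;>
        · unfold dG sG at *; split_ifs at * <;> omega
    · refine ⟨b, by omega, Or.inl ⟨?_, ?_⟩⟩ <;>
        · unfold dG sG at *; split_ifs at * <;> omega
  · by_cases hah : h ≤ a
    · refine ⟨a - h, by omega, Or.inl ⟨?_, ?_⟩⟩ <;>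
        · unfold dG sG at *; split_ifs at * <;> omega
    · refine ⟨a, by omega, Or.inr ⟨?_, ?_⟩⟩ <;>
        · unfold dG sG at *; split_ifs at * <;> omega

end conn2

section conn3
variable {n : ℕ} (h8 : 8 ≤ n) (hr : n % 8 = 0 ∨ n % 8 = 4 ∨ n % 8 = 7)
  (S : Finset (Fin n)) (hS : S.card ≤ 2)
include h8 hr hS

lemma MR_all : ∀ q, q < MQ n → ∀ q', q' < MQ n → MR S q q' := by
  have hM2 := M_ge2 h8 hr
  have hh1 := h_ge1 h8 hr
  have hMb := hM_bounds h8 hr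
  by_cases hall : ∀ q, q < MQ n → cycleAlive S q
  · have key : ∀ q, q < MQ n → MR S 0 q := by
      intro q hq
      have hd : dG (MQ n) 0 q ≤ MQ n := by unfold dG; split_ifs <;> omega
      have hseg := cycSeg h8 hr S hS (dG (MQ n) 0 q) hd 0 (by omega)
        (fun j hj => hall _ (by unfold rG; split_ifs <;> omega))
      have he : rG (MQ n) 0 (dG (MQ n) 0 q) = q := by unfold rG dG; split_ifs <;> omega
      rwa [he] at hseg
    intro q hq q' hq'
    exact MR_trans h8 hr S hS (MR_symm S (key q hq)) (by omega) (key q' hq')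
  · push_neg at hall
    obtain ⟨a, ha, hda⟩ := hall
    have hs1M : sG (MQ n) a < MQ n := by unfold sG; split_ifs <;> omega
    by_cases hrest : ∀ q, q < MQ n → q ≠ a → cycleAlive S q
    · have key : ∀ q, q < MQ n → MR S (sG (MQ n) a) q := by
        intro q hq
        have hd : dG (MQ n) (sG (MQ n) a) q ≤ MQ n := by unfold dG; split_ifs <;> omega
        have hseg := cycSeg h8 hr S hS (dG (MQ n) (sG (MQ n) a) q) hd (sG (MQ n) a) hs1M
          (fun j hj => by
            refine hrest _ (by unfold rG sG; split_ifs <;> omega) ?_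
            intro hcon
            unfold rG at hcon
            unfold dG at hj
            unfold sG at hcon hj
            split_ifs at hcon hj <;> omega)
        have he : rG (MQ n) (sG (MQ n) a) (dG (MQ n) (sG (MQ n) a) q) = q := by
          unfold rG dG; split_ifs <;> omega
        rwa [he] at hseg
      intro q hq q' hq'
      exact MR_trans h8 hr S hS (MR_symm S (key q hq)) hs1M (key q' hq')
    · push_neg at hrest
      obtain ⟨b, hb, hba, hdb⟩ := hrest
      have hs2M : sG (MQ n) b < MQ n := by unfold sG; split_ifs <;> omega
      obtain ⟨sa, msa, ksa⟩ := killer_cyc S hda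
      obtain ⟨sb, msb, ksb⟩ := killer_cyc S hdb
      have hsab : sa ≠ sb := kC_ne h8 hr ha hb (Ne.symm hba) ksa ksb
      have hch : ∀ i, i + hQ n < MQ n → chordAlive S i := by
        intro i hi
        by_contra hdc
        obtain ⟨sc, msc, ksc⟩ := killer_ch S hdc
        exact three_distinct S hS msa msb msc hsab
          (kCH_ne h8 hr ha hi ksa ksc) (kCH_ne h8 hr hb hi ksb ksc)
      have hcy : ∀ q, q < MQ n → q ≠ a → q ≠ b → cycleAlive S q := by
        intro q hq hqa hqb
        by_contra hdq
        obtain ⟨sq, msq, ksq⟩ := killer_cyc S hdq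
        exact three_distinct S hS msa msb msq hsab
          (kC_ne h8 hr ha hq (Ne.symm hqa) ksa ksq) (kC_ne h8 hr hb hq (Ne.symm hqb) ksb ksq)
      have keyA : ∀ q, q < MQ n →
          dG (MQ n) (sG (MQ n) a) q ≤ dG (MQ n) (sG (MQ n) a) b → MR S (sG (MQ n) a) q := by
        intro q hq hqA
        have hd : dG (MQ n) (sG (MQ n) a) q ≤ MQ n := by unfold dG; split_ifs <;> omega
        have hseg := cycSeg h8 hr S hS (dG (MQ n) (sG (MQ n) a) q) hd (sG (MQ n) a) hs1M
          (fun j hj => by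
            refine hcy _ (by unfold rG sG; split_ifs <;> omega) ?_ ?_ <;>
              · intro hcon
                unfold rG at hcon
                unfold dG at hj hqA
                unfold sG at hcon hj hqA
                split_ifs at hcon hj hqA <;> omega)
        have he : rG (MQ n) (sG (MQ n) a) (dG (MQ n) (sG (MQ n) a) q) = q := by
          unfold rG dG; split_ifs <;> omega
        rwa [he] at hseg
      have keyB : ∀ q, q < MQ n →
          ¬ dG (MQ n) (sG (MQ n) a) q ≤ dG (MQ n) (sG (MQ n) a) b → MR S (sG (MQ n) b) q := by
        intro q hq hqB
        have hd : dG (MQ n) (sG (MQ n) b) q ≤ MQ n := by unfold dG; split_ifs <;> omega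
        have hseg := cycSeg h8 hr S hS (dG (MQ n) (sG (MQ n) b) q) hd (sG (MQ n) b) hs2M
          (fun j hj => by
            refine hcy _ (by unfold rG sG; split_ifs <;> omega) ?_ ?_ <;>
              · intro hcon
                unfold rG at hcon
                unfold dG at hj hqB
                unfold sG at hcon hj hqB
                split_ifs at hcon hj hqB <;> omega)
        have he : rG (MQ n) (sG (MQ n) b) (dG (MQ n) (sG (MQ n) b) q) = q := by
          unfold rG dG; split_ifs <;> omega
        rwa [he] at hseg
      obtain ⟨i, hiOK, hcross⟩ := crossing h8 hr ha hb (Ne.symm hba)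
      have hbridge : MR S (sG (MQ n) a) (sG (MQ n) b) := by
        rcases hcross with ⟨hi1, hi2⟩ | ⟨hi1, hi2⟩
        · exact MR_trans h8 hr S hS
            (MR_trans h8 hr S hS (keyA i (by omega) hi1) (by omega)
              (MR_chord h8 hr S hiOK (hch i hiOK)))
            (by omega) (MR_symm S (keyB (i + hQ n) (by omega) hi2))
        · exact MR_trans h8 hr S hS
            (MR_trans h8 hr S hS (keyA (i + hQ n) (by omega) hi2) (by omega)
              (MR_symm S (MR_chord h8 hr S hiOK (hch i hiOK))))
            (by omega) (MR_symm S (keyB i (by omega) hi1))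
      have toS1 : ∀ q, q < MQ n → MR S (sG (MQ n) a) q := by
        intro q hq
        by_cases hside : dG (MQ n) (sG (MQ n) a) q ≤ dG (MQ n) (sG (MQ n) a) b
        · exact keyA q hq hside
        · exact MR_trans h8 hr S hS hbridge hs2M (keyB q hq hside)
      intro q hq q' hq'
      exact MR_trans h8 hr S hS (MR_symm S (toS1 q hq)) hs1M (toS1 q' hq')

end conn3

section final
variable {n : ℕ} (h8 : 8 ≤ n) (hr : n % 8 = 0 ∨ n % 8 = 4 ∨ n % 8 = 7)
include h8 hr

lemma triangle_exists (v : Fin n) :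
    ∃ a b c : Fin n, (Gr n).Adj v a ∧ (Gr n).Adj v b ∧ (Gr n).Adj v c ∧
      (Gr n).Adj a b ∧ (Gr n).Adj a c ∧ (Gr n).Adj b c := by
  have hM2 := M_ge2 h8 hr
  have hqM : min (v.val / 4) (MQ n - 1) < MQ n := by omega
  have hw1 : base n (min (v.val / 4) (MQ n - 1)) ≤ v.val := (inW_div4 h8 hr v.isLt).1
  have hw2 : v.val < base n (min (v.val / 4) (MQ n - 1)) + 4 := (inW_div4 h8 hr v.isLt).2
  set q := min (v.val / 4) (MQ n - 1) with hqdef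
  have hb := base_bound h8 hr hqM
  have key : ∀ (x y : ℕ) (hx : x < n) (hy : y < n), base n q ≤ x → x < base n q + 4 →
      base n q ≤ y → y < base n q + 4 → x ≠ y → (Gr n).Adj ⟨x, hx⟩ ⟨y, hy⟩ :=
    fun x y hx hy a1 a2 a3 a4 a5 =>
      ⟨by simpa [Fin.ext_iff] using a5, rel_window h8 hr hqM a1 a2 a3 a4⟩
  have hveq : ∀ (k : ℕ) (hk : base n q + k < n), v.val = base n q + k →
      v = ⟨base n q + k, hk⟩ := fun k hk he => Fin.ext he
  have hdis : v.val = base n q + 0 ∨ v.val = base n q + 1 ∨ v.val = base n q + 2 ∨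
      v.val = base n q + 3 := by omega
  rcases hdis with he | he | he | he
  · refine ⟨⟨base n q + 1, by omega⟩, ⟨base n q + 2, by omega⟩, ⟨base n q + 3, by omega⟩,
      ?_, ?_, ?_, ?_, ?_, ?_⟩ <;>
    first
      | (rw [hveq 0 (by omega) he];
         exact key _ _ _ _ (by omega) (by omega) (by omega) (by omega) (by omega))
      | exact key _ _ _ _ (by omega) (by omega) (by omega) (by omega) (by omega)
  · refine ⟨⟨base n q + 0, by omega⟩, ⟨base n q + 2, by omega⟩, ⟨base n q + 3, by omega⟩,
      ?_, ?_, ?_, ?_, ?_, ?_⟩ <;>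
    first
      | (rw [hveq 1 (by omega) he];
         exact key _ _ _ _ (by omega) (by omega) (by omega) (by omega) (by omega))
      | exact key _ _ _ _ (by omega) (by omega) (by omega) (by omega) (by omega)
  · refine ⟨⟨base n q + 0, by omega⟩, ⟨base n q + 1, by omega⟩, ⟨base n q + 3, by omega⟩,
      ?_, ?_, ?_, ?_, ?_, ?_⟩ <;>
    first
      | (rw [hveq 2 (by omega) he];
         exact key _ _ _ _ (by omega) (by omega) (by omega) (by omega) (by omega))
      | exact key _ _ _ _ (by omega) (by omega) (by omega) (by omega) (by omega)
  · refine ⟨⟨base n q + 0, by omega⟩, ⟨base n q + 1, by omega⟩, ⟨base n q + 2, by omega⟩,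
      ?_, ?_, ?_, ?_, ?_, ?_⟩ <;>
    first
      | (rw [hveq 3 (by omega) he];
         exact key _ _ _ _ (by omega) (by omega) (by omega) (by omega) (by omega))
      | exact key _ _ _ _ (by omega) (by omega) (by omega) (by omega) (by omega)

lemma locally : LocallyNonforesty (Gr n) := by
  intro v hacyc
  obtain ⟨a, b, c, hva, hvb, hvc, hab, hac2, hbc⟩ := triangle_exists h8 hr v
  rw [isAcyclic_iff_path_unique] at hacyc
  have hAB : ((Gr n).induce ((Gr n).neighborSet v)).Adj ⟨a, hva⟩ ⟨b, hvb⟩ := hab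
  have hAC : ((Gr n).induce ((Gr n).neighborSet v)).Adj ⟨a, hva⟩ ⟨c, hvc⟩ := hac2
  have hCB : ((Gr n).induce ((Gr n).neighborSet v)).Adj ⟨c, hvc⟩ ⟨b, hvb⟩ := hbc.symm
  let p1 : ((Gr n).induce ((Gr n).neighborSet v)).Path ⟨a, hva⟩ ⟨b, hvb⟩ :=
    ⟨SimpleGraph.Walk.cons hAB SimpleGraph.Walk.nil, by simp [hAB.ne]⟩
  let p2 : ((Gr n).induce ((Gr n).neighborSet v)).Path ⟨a, hva⟩ ⟨b, hvb⟩ :=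
    ⟨SimpleGraph.Walk.cons hAC (SimpleGraph.Walk.cons hCB SimpleGraph.Walk.nil), by
      simp [SimpleGraph.Walk.isPath_def, hAC.ne, hAB.ne, hCB.ne]⟩
  have heq := hacyc p1 p2
  have hlen : (1 : ℕ) = 2 := by
    simpa [p1, p2] using congrArg SimpleGraph.Walk.length (congrArg Subtype.val heq)
  omega

lemma connected_sub (S : Finset (Fin n)) (hS : S.card ≤ 2) :
    ((Gr n).induce ((↑S : Set (Fin n))ᶜ)).Connected := by
  have hM2 := M_ge2 h8 hr
  rw [connected_iff]
  constructor
  · intro x y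
    have hax : (x : Fin n).val ∉ Sv S := by
      intro hc
      rw [Sv, Finset.mem_image] at hc
      obtain ⟨u, hu, huv⟩ := hc
      exact x.2 (Finset.mem_coe.mpr ((Fin.ext huv : u = ↑x) ▸ hu))
    have hay : (y : Fin n).val ∉ Sv S := by
      intro hc
      rw [Sv, Finset.mem_image] at hc
      obtain ⟨u, hu, huv⟩ := hc
      exact y.2 (Finset.mem_coe.mpr ((Fin.ext huv : u = ↑y) ▸ hu))
    have h1 := MR_all h8 hr S hS (min ((x : Fin n).val / 4) (MQ n - 1)) (by omega)
      (min ((y : Fin n).val / 4) (MQ n - 1)) (by omega)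
      (x : Fin n).val (y : Fin n).val (x : Fin n).isLt (y : Fin n).isLt hax hay
      (inW_div4 h8 hr (x : Fin n).isLt) (inW_div4 h8 hr (y : Fin n).isLt)
    have hx : toV S (x : Fin n).val (x : Fin n).isLt hax = x := Subtype.ext (Fin.ext rfl)
    have hy : toV S (y : Fin n).val (y : Fin n).isLt hay = y := Subtype.ext (Fin.ext rfl)
    rwa [hx, hy] at h1
  · obtain ⟨z, hz, haz, _⟩ := quad_alive h8 hr S hS (q := 0) (by omega)
    exact ⟨toV S z hz haz⟩

end final

end S15

theorem stmt15 (n : ℕ) (hn : 8 ≤ n)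
    (hr : n % 8 = 0 ∨ n % 8 = 4 ∨ n % 8 = 7) :
    ∃ G : SimpleGraph (Fin n), ThreeConnected G ∧ LocallyNonforesty G ∧
      G.edgeSet.ncard = 2 * n - n / 8 := by
  refine ⟨S15.Gr n, ⟨?_, ?_⟩, S15.locally hn hr, S15.ncard_edges hn hr⟩
  · simp only [Fintype.card_fin]; omega
  · intro S hS
    exact S15.connected_sub hn hr S hS
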